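/- There exists a 4-free set S of positive integers whose lower density is at least 1/3 (for example S = ⋃_{i ≥ 0} {4^i, 4^i+1, ..., 2·4^i}). Hence β(4) = sup{lower density of S : S is 4-free} ≥ 1/3. -/

import Mathlib

open Filter

/-- `f : ℕ → ℕ` is a (bijective) enumeration of the set `S`. -/
def IsPermOf (f : ℕ → ℕ) (S : Set ℕ) : Prop :=
  Function.Injective f ∧ Set.range f = S

/-- A set `S` of naturals is 4-free if some enumeration of `S` contains no
4-term arithmetic progression (with nonzero, possibly negative, common
difference) as a subsequence. -/
def FourFree (S : Set ℕ) : Prop :=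
  ∃ f : ℕ → ℕ, IsPermOf f S ∧
    ¬ ∃ i₁ i₂ i₃ i₄ : ℕ, i₁ < i₂ ∧ i₂ < i₃ ∧ i₃ < i₄ ∧
      ((f i₂ : ℤ) - (f i₁ : ℤ) = (f i₃ : ℤ) - (f i₂ : ℤ)) ∧
      ((f i₃ : ℤ) - (f i₂ : ℤ) = (f i₄ : ℤ) - (f i₃ : ℤ)) ∧
      f i₁ ≠ f i₂

/-- The lower density `liminf |S ∩ [1, n]| / n` of a set of naturals. -/
noncomputable def lowerDensity (S : Set ℕ) : ℝ :=
  liminf (fun n : ℕ => (Nat.card ↥(S ∩ Set.Icc 1 n) : ℝ) / n) atTop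

def apfree : ℕ → List ℕ
  | 0 => []
  | 1 => [0]
  | (n+2) => ((apfree ((n+3)/2)).map (2 * ·)) ++ ((apfree ((n+2)/2)).map (2 * · + 1))
decreasing_by all_goals omega

lemma apfree_zero : apfree 0 = [] := by rw [apfree]

lemma apfree_one : apfree 1 = [0] := by rw [apfree]

lemma apfree_two (n : ℕ) : apfree (n+2) =
    ((apfree ((n+3)/2)).map (2 * ·)) ++ ((apfree ((n+2)/2)).map (2 * · + 1)) := by
  rw [apfree]

lemma interleave_perm (n : ℕ) :
    ((List.range ((n+1)/2)).map (2 * ·) ++ (List.range (n/2)).map (2 * · + 1)).Perm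
      (List.range n) := by
  induction n with
  | zero => simp
  | succ n ih =>
    rw [List.range_succ]
    rcases Nat.even_or_odd n with ⟨m, hm⟩ | ⟨m, hm⟩
    · have h1 : (n + 1 + 1) / 2 = m + 1 := by omega
      have h2 : (n + 1) / 2 = m := by omega
      have h3 : n / 2 = m := by omega
      rw [h1, h2]
      rw [h2, h3] at ih
      rw [List.range_succ, List.map_append]
      have key : ((List.range m).map (2 * ·) ++ [m].map (2 * ·)) ++
            (List.range m).map (2 * · + 1) |>.Perm
          (((List.range m).map (2 * ·) ++ (List.range m).map (2 * · + 1))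
            ++ [m].map (2 * ·)) := by
        rw [List.append_assoc, List.append_assoc]
        exact List.Perm.append_left _ List.perm_append_comm
      refine key.trans (ih.append ?_)
      simp only [List.map_cons, List.map_nil]
      rw [show 2 * m = n by omega]
    · have h1 : (n + 1 + 1) / 2 = m + 1 := by omega
      have h2 : (n + 1) / 2 = m + 1 := by omega
      have h2' : (n + 1) / 2 = m + 1 := h2
      have h3 : n / 2 = m := by omega
      rw [h1, h2]
      rw [h2', h3] at ih
      rw [List.range_succ, List.map_append] at ih ⊢
      rw [List.map_append, ← List.append_assoc]
      refine ih.append ?_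
      simp only [List.map_cons, List.map_nil]
      rw [show 2 * m + 1 = n by omega]

lemma apfree_perm (n : ℕ) : (apfree n).Perm (List.range n) := by
  induction n using Nat.strong_induction_on with
  | _ n ih =>
    match n with
    | 0 => rw [apfree_zero]; rfl
    | 1 => rw [apfree_one]; rfl
    | (n+2) =>
      rw [apfree_two]
      have h1 := ih ((n+3)/2) (by omega)
      have h2 := ih ((n+2)/2) (by omega)
      have := (h1.map (2 * ·)).append (h2.map (2 * · + 1))
      refine this.trans ?_
      have := interleave_perm (n+2)
      rw [show (n+2+1)/2 = (n+3)/2 from rfl] at this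
      exact this

/-- No 3-term AP as a subsequence. -/
lemma apfree_noAP3 (n : ℕ) : ∀ x y z : ℕ, [x, y, z].Sublist (apfree n) →
    (x : ℤ) + z = 2 * y → x = z := by
  induction n using Nat.strong_induction_on with
  | _ n ih =>
    match n with
    | 0 => intro x y z h _; rw [apfree_zero] at h; simp at h
    | 1 => intro x y z h _; rw [apfree_one] at h
           exact absurd h.length_le (by simp)
    | (n+2) =>
      intro x y z h hap
      rw [apfree_two] at h
      rw [List.sublist_append_iff] at h
      obtain ⟨l₁, l₂, heq, hs₁, hs₂⟩ := h
      -- l₁ is a prefix of [x,y,z]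
      have hmem₁ : ∀ a ∈ l₁, 2 ∣ a := by
        intro a ha
        have := hs₁.mem ha
        rw [List.mem_map] at this
        obtain ⟨b, _, hb⟩ := this
        exact ⟨b, by omega⟩
      have hmem₂ : ∀ a ∈ l₂, ¬ 2 ∣ a := by
        intro a ha
        have := hs₂.mem ha
        rw [List.mem_map] at this
        obtain ⟨b, _, hb⟩ := this
        omega
      -- case on the split of [x,y,z]
      match l₁, heq with
      | [], heq =>
        -- all odd
        rw [List.nil_append] at heq
        rw [← heq] at hs₂
        rw [List.sublist_map_iff] at hs₂
        obtain ⟨l', hs', hmap⟩ := hs₂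
        match l', hmap with
        | [a, b, c], hmap =>
          simp only [List.map_cons, List.map_nil, List.cons.injEq] at hmap
          obtain ⟨hx, hy, hz, -⟩ := hmap
          have : a = c := ih ((n+2)/2) (by omega) a b c hs' (by omega)
          omega
      | [x'], heq =>
        simp only [List.cons_append, List.nil_append, List.cons.injEq] at heq
        obtain ⟨hx, hl₂⟩ := heq
        -- x even, y z odd
        have hxe : 2 ∣ x := hmem₁ x (by rw [hx]; simp)
        have hyo : ¬ 2 ∣ y := hmem₂ y (by rw [← hl₂]; simp)
        have hzo : ¬ 2 ∣ z := hmem₂ z (by rw [← hl₂]; simp)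
        omega
      | [x', y'], heq =>
        simp only [List.cons_append, List.nil_append, List.cons.injEq] at heq
        obtain ⟨hx, hy, hl₂⟩ := heq
        have hxe : 2 ∣ x := hmem₁ x (by rw [hx]; simp)
        have hye : 2 ∣ y := hmem₁ y (by rw [hy]; simp)
        have hzo : ¬ 2 ∣ z := hmem₂ z (by rw [← hl₂]; simp)
        omega
      | [x', y', z'], heq =>
        simp only [List.cons_append, List.nil_append, List.cons.injEq] at heq
        obtain ⟨hx, hy, hz, hl₂⟩ := heq
        subst hx hy hz
        rw [List.sublist_map_iff] at hs₁
        obtain ⟨l', hs', hmap⟩ := hs₁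
        match l', hmap with
        | [a, b, c], hmap =>
          simp only [List.map_cons, List.map_nil, List.cons.injEq] at hmap
          obtain ⟨ha, hb, hc, -⟩ := hmap
          have : a = c := ih ((n+3)/2) (by omega) a b c hs' (by omega)
          omega
      | x' :: y' :: z' :: w :: l, heq =>
        exfalso
        have := congrArg List.length heq
        simp at this

noncomputable def blockList (i : ℕ) : List ℕ := (apfree (4 ^ i + 1)).map (4 ^ i + ·)

lemma blockList_length (i : ℕ) : (blockList i).length = 4 ^ i + 1 := by
  simp [blockList, (apfree_perm _).length_eq]

lemma blockList_mem {i x : ℕ} : x ∈ blockList i ↔ 4 ^ i ≤ x ∧ x ≤ 2 * 4 ^ i := by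
  simp only [blockList, List.mem_map]
  constructor
  · rintro ⟨a, ha, rfl⟩
    have := (apfree_perm _).mem_iff.mp ha
    rw [List.mem_range] at this
    omega
  · rintro ⟨h1, h2⟩
    have hp : 1 ≤ 4 ^ i := Nat.one_le_pow _ _ (by norm_num)
    refine ⟨x - 4 ^ i, ?_, by omega⟩
    rw [(apfree_perm _).mem_iff, List.mem_range]
    omega

lemma blockList_nodup (i : ℕ) : (blockList i).Nodup := by
  refine List.Nodup.map (fun a b h => by omega) ?_
  exact (apfree_perm _).nodup_iff.mpr List.nodup_range

lemma blockList_noAP3 {i : ℕ} {x y z : ℕ} (h : [x, y, z].Sublist (blockList i))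
    (hap : (x : ℤ) + z = 2 * y) : x = z := by
  rw [blockList, List.sublist_map_iff] at h
  obtain ⟨l', hs, hmap⟩ := h
  match l', hmap with
  | [a, b, c], hmap =>
    simp only [List.map_cons, List.map_nil, List.cons.injEq] at hmap
    obtain ⟨hx, hy, hz, -⟩ := hmap
    have : a = c := apfree_noAP3 _ a b c hs (by omega)
    omega

/-- auxiliary recursion: find the block. -/
noncomputable def Fseq : ℕ → ℕ → ℕ
  | i, r =>
    if h : r < 4 ^ i + 1 then (blockList i).get ⟨r, by rw [blockList_length]; exact h⟩
    else Fseq (i + 1) (r - (4 ^ i + 1))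
termination_by i r => r
decreasing_by simp_wf; have : 1 ≤ 4 ^ i := Nat.one_le_pow _ _ (by norm_num); omega

/-- the enumeration of `⋃ i, [4^i, 2·4^i]`. -/
noncomputable def fseq (n : ℕ) : ℕ := Fseq 0 n

def cblk (i : ℕ) : ℕ := ∑ t ∈ Finset.range i, (4 ^ t + 1)

lemma cblk_succ (i : ℕ) : cblk (i + 1) = cblk i + (4 ^ i + 1) := by
  rw [cblk, Finset.sum_range_succ]; rfl

lemma cblk_mono : Monotone cblk := by
  intro a b h
  induction b with
  | zero => rw [Nat.le_zero.mp h]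
  | succ b ih =>
    rcases Nat.lt_or_ge a (b+1) with h' | h'
    · have := ih (by omega)
      have h4 : 1 ≤ 4 ^ b := Nat.one_le_pow _ _ (by norm_num)
      rw [cblk_succ]; omega
    · rw [show a = b + 1 by omega]

lemma Fseq_shift (j i k : ℕ) :
    Fseq j ((∑ t ∈ Finset.range i, (4 ^ (j + t) + 1)) + k) = Fseq (j + i) k := by
  induction i generalizing j with
  | zero => simp
  | succ i ih =>
    have hpeel : (∑ t ∈ Finset.range (i+1), (4 ^ (j + t) + 1)) =
        (4 ^ j + 1) + ∑ t ∈ Finset.range i, (4 ^ (j + 1 + t) + 1) := by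
      rw [Finset.sum_range_succ']
      simp only [Nat.add_zero]
      rw [Nat.add_comm]
      congr 1
      refine Finset.sum_congr rfl fun t _ => ?_
      congr 2
      omega
    rw [hpeel]
    have harg : (4 ^ j + 1) + (∑ t ∈ Finset.range i, (4 ^ (j + 1 + t) + 1)) + k
        = ((∑ t ∈ Finset.range i, (4 ^ (j + 1 + t) + 1)) + k) + (4 ^ j + 1) := by omega
    rw [harg]
    rw [Fseq.eq_1]
    rw [dif_neg (by omega)]
    rw [Nat.add_sub_cancel]
    rw [ih (j+1)]
    congr 1
    omega

lemma fseq_eq (i k : ℕ) (hk : k < 4 ^ i + 1) :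
    fseq (cblk i + k) = (blockList i).get ⟨k, by rw [blockList_length]; exact hk⟩ := by
  have h0 : cblk i = ∑ t ∈ Finset.range i, (4 ^ (0 + t) + 1) := by
    refine Finset.sum_congr rfl fun t _ => by rw [Nat.zero_add]
  rw [fseq, h0, Fseq_shift 0 i k, Nat.zero_add, Fseq.eq_1, dif_pos hk]

lemma exists_decomp (n : ℕ) : ∃ i k, k < 4 ^ i + 1 ∧ n = cblk i + k := by
  have hub : n < cblk (n + 1) := by
    have : ∀ m, m ≤ cblk m := by
      intro m
      induction m with
      | zero => simp [cblk]
      | succ m ih => rw [cblk_succ]; have : 1 ≤ 4 ^ m := Nat.one_le_pow _ _ (by norm_num); omega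
    have := this (n+1); omega
  have hne : ∃ j, n < cblk j := ⟨n + 1, hub⟩
  classical
  have hj : n < cblk (Nat.find hne) := Nat.find_spec hne
  have hjpos : Nat.find hne ≠ 0 := by
    intro h
    rw [h] at hj
    simp [cblk] at hj
  obtain ⟨i, hi⟩ : ∃ i, Nat.find hne = i + 1 := ⟨Nat.find hne - 1, by omega⟩
  rw [hi] at hj
  have hle : cblk i ≤ n := by
    by_contra h
    have : Nat.find hne ≤ i := Nat.find_le (h := hne) (show n < cblk i by omega)
    omega
  rw [cblk_succ] at hj
  exact ⟨i, n - cblk i, by omega, by omega⟩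

lemma decomp_lt {i k i' k' : ℕ} (hk : k < 4 ^ i + 1) (hk' : k' < 4 ^ i' + 1)
    (h : cblk i + k < cblk i' + k') : i ≤ i' ∧ (i = i' → k < k') := by
  constructor
  · by_contra hlt
    push_neg at hlt
    have h1 : cblk (i' + 1) ≤ cblk i := cblk_mono hlt
    rw [cblk_succ] at h1
    omega
  · rintro rfl; omega

lemma fseq_mem (i k : ℕ) (hk : k < 4 ^ i + 1) :
    4 ^ i ≤ fseq (cblk i + k) ∧ fseq (cblk i + k) ≤ 2 * 4 ^ i := by
  rw [fseq_eq i k hk]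
  exact blockList_mem.mp (List.get_mem _ _)

lemma two_mul_pow_lt {i j : ℕ} (h : i < j) : 2 * 4 ^ i < 4 ^ j := by
  have h1 : 4 ^ (i + 1) ≤ 4 ^ j := Nat.pow_le_pow_right (by norm_num) h
  have h2 : 1 ≤ 4 ^ i := Nat.one_le_pow _ _ (by norm_num)
  rw [pow_succ] at h1
  omega

lemma fseq_injective : Function.Injective fseq := by
  intro n n' h
  obtain ⟨i, k, hk, rfl⟩ := exists_decomp n
  obtain ⟨i', k', hk', rfl⟩ := exists_decomp n'
  have hv := fseq_mem i k hk
  have hv' := fseq_mem i' k' hk'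
  have hii : i = i' := by
    by_contra hne
    rcases Nat.lt_or_ge i i' with hlt | hge
    · have := two_mul_pow_lt hlt; omega
    · have := two_mul_pow_lt (show i' < i by omega); omega
  subst hii
  have hkk : k = k' := by
    rw [fseq_eq i k hk, fseq_eq i k' hk'] at h
    have := (List.Nodup.get_inj_iff (blockList_nodup i)).mp h
    simpa using this
  rw [hkk]

lemma fseq_range : Set.range fseq = ⋃ i, Set.Icc (4 ^ i) (2 * 4 ^ i) := by
  ext x
  simp only [Set.mem_range, Set.mem_iUnion, Set.mem_Icc]
  constructor
  · rintro ⟨n, rfl⟩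
    obtain ⟨i, k, hk, rfl⟩ := exists_decomp n
    exact ⟨i, fseq_mem i k hk⟩
  · rintro ⟨i, h1, h2⟩
    have hx : x ∈ blockList i := blockList_mem.mpr ⟨h1, h2⟩
    rw [List.mem_iff_get] at hx
    obtain ⟨⟨k, hk⟩, hget⟩ := hx
    have hk' : k < 4 ^ i + 1 := by rw [blockList_length] at hk; exact hk
    exact ⟨cblk i + k, by rw [fseq_eq i k hk']; exact hget⟩

lemma sublist_of_get {l : List ℕ} {a b c : ℕ} (hab : a < b) (hbc : b < c)
    (hc : c < l.length) :
    [l.get ⟨a, by omega⟩, l.get ⟨b, by omega⟩, l.get ⟨c, hc⟩].Sublist l := by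
  have := List.map_getElem_sublist (l := l)
    (is := [⟨a, by omega⟩, ⟨b, by omega⟩, ⟨c, hc⟩])
    (by simp [hab, hbc, Nat.lt_trans hab hbc])
  simpa using this

lemma fseq_no4 : ¬ ∃ i₁ i₂ i₃ i₄ : ℕ, i₁ < i₂ ∧ i₂ < i₃ ∧ i₃ < i₄ ∧
    ((fseq i₂ : ℤ) - (fseq i₁ : ℤ) = (fseq i₃ : ℤ) - (fseq i₂ : ℤ)) ∧
    ((fseq i₃ : ℤ) - (fseq i₂ : ℤ) = (fseq i₄ : ℤ) - (fseq i₃ : ℤ)) ∧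
    fseq i₁ ≠ fseq i₂ := by
  rintro ⟨n1, n2, n3, n4, h12, h23, h34, e1, e2, hne⟩
  have triple : ∀ b ka kb kc, ka < 4 ^ b + 1 → kb < 4 ^ b + 1 → kc < 4 ^ b + 1 →
      ka < kb → kb < kc →
      (fseq (cblk b + ka) : ℤ) + fseq (cblk b + kc) = 2 * fseq (cblk b + kb) →
      fseq (cblk b + ka) = fseq (cblk b + kc) := by
    intro b ka kb kc hka hkb hkc hab hbc hap
    rw [fseq_eq b ka hka, fseq_eq b kc hkc] at hap ⊢
    rw [fseq_eq b kb hkb] at hap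
    refine blockList_noAP3 (i := b) ?_ hap
    have hc : kc < (blockList b).length := by rw [blockList_length]; exact hkc
    exact sublist_of_get hab hbc hc
  obtain ⟨b1, k1, hk1, rfl⟩ := exists_decomp n1
  obtain ⟨b2, k2, hk2, rfl⟩ := exists_decomp n2
  obtain ⟨b3, k3, hk3, rfl⟩ := exists_decomp n3
  obtain ⟨b4, k4, hk4, rfl⟩ := exists_decomp n4
  have m12 := decomp_lt hk1 hk2 h12
  have m23 := decomp_lt hk2 hk3 h23
  have m34 := decomp_lt hk3 hk4 h34
  have hv1 := fseq_mem b1 k1 hk1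
  have hv2 := fseq_mem b2 k2 hk2
  have hv3 := fseq_mem b3 k3 hk3
  have hv4 := fseq_mem b4 k4 hk4
  rcases eq_or_lt_of_le m12.1 with hb12 | hb12
  · -- b1 = b2
    rcases eq_or_lt_of_le m23.1 with hb23 | hb23
    · -- b1 = b2 = b3 : 3-AP inside one block
      subst hb12; subst hb23
      have h1 := m12.2 rfl
      have h2 := m23.2 rfl
      have := triple b1 k1 k2 k3 hk1 hk2 hk3 h1 h2 (by omega)
      omega
    · -- b2 < b3
      subst hb12
      have hp : 4 ^ b1 * 4 ≤ 4 ^ b3 := by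
        have := Nat.pow_le_pow_right (show 1 ≤ 4 by norm_num) hb23
        rw [pow_succ] at this; exact this
      omega
  · -- b1 < b2
    rcases eq_or_lt_of_le m23.1 with hb23 | hb23
    · -- b2 = b3
      rcases eq_or_lt_of_le m34.1 with hb34 | hb34
      · -- b2 = b3 = b4
        subst hb23; subst hb34
        have h1 := m23.2 rfl
        have h2 := m34.2 rfl
        have heq := triple b2 k2 k3 k4 hk2 hk3 hk4 h1 h2 (by omega)
        omega
      · -- b3 < b4
        subst hb23
        have hp : 4 ^ b2 * 4 ≤ 4 ^ b4 := by
          have := Nat.pow_le_pow_right (show 1 ≤ 4 by norm_num) hb34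
          rw [pow_succ] at this; exact this
        omega
    · -- b1 < b2 < b3
      have hp : 4 ^ b2 * 4 ≤ 4 ^ b3 := by
        have := Nat.pow_le_pow_right (show 1 ≤ 4 by norm_num) hb23
        rw [pow_succ] at this; exact this
      have h1 : 1 ≤ 4 ^ b1 := Nat.one_le_pow _ _ (by norm_num)
      omega

lemma set_Icc_card (a b : ℕ) : Nat.card (Set.Icc a b) = b + 1 - a := by
  rw [show Set.Icc a b = ↑(Finset.Icc a b) by simp,
    Nat.card_coe_set_eq, Set.ncard_coe_finset, Nat.card_Icc]

lemma geom43 (k : ℕ) : 3 * (∑ i ∈ Finset.range k, 4 ^ i) + 1 = 4 ^ k := by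
  induction k with
  | zero => simp
  | succ k ih => rw [Finset.sum_range_succ, pow_succ]; omega

lemma count_lower (n : ℕ) (hn : 1 ≤ n) :
    (n : ℝ) / 3 ≤ (Nat.card ↥((⋃ i : ℕ, Set.Icc (4 ^ i) (2 * 4 ^ i)) ∩ Set.Icc 1 n) : ℝ) := by
  classical
  set S : Set ℕ := ⋃ i : ℕ, Set.Icc (4 ^ i) (2 * 4 ^ i) with hS
  set k := Nat.log 4 n with hk
  have hkn : 4 ^ k ≤ n := Nat.pow_log_le_self 4 (by omega)
  have hnk : n < 4 ^ (k + 1) := Nat.lt_pow_succ_log_self (by norm_num) n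
  set T : Finset ℕ := (Finset.range (k + 1)).biUnion
    (fun i => Finset.Icc (4 ^ i) (min (2 * 4 ^ i) n)) with hT
  -- T ⊆ S ∩ Icc 1 n
  have hsub : ↑T ⊆ S ∩ Set.Icc 1 n := by
    intro x hx
    simp only [hT, Finset.coe_biUnion, Set.mem_iUnion, Finset.mem_coe, Finset.mem_Icc,
      Finset.mem_range] at hx
    obtain ⟨i, _, h1, h2⟩ := hx
    have hp : 1 ≤ 4 ^ i := Nat.one_le_pow _ _ (by norm_num)
    constructor
    · exact Set.mem_iUnion.mpr ⟨i, Set.mem_Icc.mpr ⟨h1, by omega⟩⟩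
    · exact Set.mem_Icc.mpr ⟨by omega, by omega⟩
  have hfin : (S ∩ Set.Icc 1 n).Finite := (Set.finite_Icc 1 n).subset Set.inter_subset_right
  have hcard1 : T.card ≤ Nat.card ↥(S ∩ Set.Icc 1 n) := by
    have := Nat.card_mono hfin hsub
    rwa [Nat.card_coe_set_eq, Set.ncard_coe_finset] at this
  -- card T
  have hdisj : ∀ i ∈ Finset.range (k+1), ∀ j ∈ Finset.range (k+1), i ≠ j →
      Disjoint (Finset.Icc (4 ^ i) (min (2 * 4 ^ i) n))
        (Finset.Icc (4 ^ j) (min (2 * 4 ^ j) n)) := by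
    have key : ∀ i j : ℕ, i < j →
        Disjoint (Finset.Icc (4 ^ i) (min (2 * 4 ^ i) n))
          (Finset.Icc (4 ^ j) (min (2 * 4 ^ j) n)) := by
      intro i j hij
      rw [Finset.disjoint_left]
      intro a ha hb
      rw [Finset.mem_Icc] at ha hb
      have h1 : 4 ^ (i + 1) ≤ 4 ^ j := Nat.pow_le_pow_right (by norm_num) hij
      have h2 : 1 ≤ 4 ^ i := Nat.one_le_pow _ _ (by norm_num)
      rw [pow_succ] at h1
      omega
    intro i _ j _ hij
    rcases Nat.lt_or_ge i j with h | h
    · exact key i j h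
    · exact (key j i (by omega)).symm
  have hTcard : T.card = ∑ i ∈ Finset.range (k+1), (min (2 * 4 ^ i) n + 1 - 4 ^ i) := by
    rw [hT, Finset.card_biUnion hdisj]
    refine Finset.sum_congr rfl fun i _ => ?_
    rw [Nat.card_Icc]
  -- n ≤ 3 * T.card
  have hmain : n ≤ 3 * T.card := by
    rw [hTcard]
    have hsplit : ∑ i ∈ Finset.range (k+1), (min (2 * 4 ^ i) n + 1 - 4 ^ i)
        = (∑ i ∈ Finset.range k, (min (2 * 4 ^ i) n + 1 - 4 ^ i))
          + (min (2 * 4 ^ k) n + 1 - 4 ^ k) := Finset.sum_range_succ _ _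
    have hmin : ∀ i ∈ Finset.range k, min (2 * 4 ^ i) n + 1 - 4 ^ i = 4 ^ i + 1 := by
      intro i hi
      rw [Finset.mem_range] at hi
      have h1 : 4 ^ (i + 1) ≤ 4 ^ k := Nat.pow_le_pow_right (by norm_num) hi
      rw [pow_succ] at h1
      have h2 : 1 ≤ 4 ^ i := Nat.one_le_pow _ _ (by norm_num)
      have : 2 * 4 ^ i ≤ n := by omega
      rw [min_eq_left this]
      omega
    rw [hsplit, Finset.sum_congr rfl hmin, Finset.sum_add_distrib, Finset.sum_const,
      Finset.card_range, smul_eq_mul, mul_one]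
    have hg := geom43 k
    have hg' := geom43 (k + 1)
    rw [Finset.sum_range_succ] at hg'
    rcases le_or_gt (2 * 4 ^ k) n with h | h
    · rw [min_eq_left h]; omega
    · rw [min_eq_right (by omega)]; omega
  -- conclude over ℝ
  have hcast : (n : ℝ) ≤ 3 * (Nat.card ↥(S ∩ Set.Icc 1 n) : ℝ) := by
    have : (n : ℝ) ≤ 3 * (T.card : ℝ) := by exact_mod_cast hmain
    refine this.trans ?_
    have : (T.card : ℝ) ≤ (Nat.card ↥(S ∩ Set.Icc 1 n) : ℝ) := by exact_mod_cast hcard1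
    linarith
  linarith

lemma card_upper (S : Set ℕ) (n : ℕ) : Nat.card ↥(S ∩ Set.Icc 1 n) ≤ n := by
  have h := Nat.card_mono (Set.finite_Icc 1 n) (Set.inter_subset_right (s := S))
  rwa [set_Icc_card, Nat.add_sub_cancel] at h

lemma ratio_le_one (S : Set ℕ) (n : ℕ) :
    (Nat.card ↥(S ∩ Set.Icc 1 n) : ℝ) / n ≤ 1 := by
  rcases Nat.eq_zero_or_pos n with rfl | hn
  · simp
  · rw [div_le_one (by exact_mod_cast hn)]
    exact_mod_cast card_upper S n

lemma ratio_nonneg (S : Set ℕ) (n : ℕ) :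
    0 ≤ (Nat.card ↥(S ∩ Set.Icc 1 n) : ℝ) / n := by
  positivity

/-- The set `⋃ i, {4^i, ..., 2·4^i}` is a 4-free set of positive integers with
lower density at least `1/3`; hence `β(4) ≥ 1/3`. -/
theorem beta_four_ge_third :
    (0 ∉ (⋃ i : ℕ, Set.Icc (4 ^ i) (2 * 4 ^ i)) ∧
      FourFree (⋃ i : ℕ, Set.Icc (4 ^ i) (2 * 4 ^ i)) ∧
      1 / 3 ≤ lowerDensity (⋃ i : ℕ, Set.Icc (4 ^ i) (2 * 4 ^ i))) ∧
    1 / 3 ≤ sSup {x : ℝ | ∃ S : Set ℕ, 0 ∉ S ∧ FourFree S ∧ lowerDensity S = x} := by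
  have h0 : 0 ∉ (⋃ i : ℕ, Set.Icc (4 ^ i) (2 * 4 ^ i)) := by
    simp only [Set.mem_iUnion, Set.mem_Icc]
    rintro ⟨i, h1, -⟩
    have := Nat.one_le_pow i 4 (by norm_num)
    omega
  have hfree : FourFree (⋃ i : ℕ, Set.Icc (4 ^ i) (2 * 4 ^ i)) :=
    ⟨fseq, ⟨fseq_injective, fseq_range⟩, fseq_no4⟩
  have hld : 1 / 3 ≤ lowerDensity (⋃ i : ℕ, Set.Icc (4 ^ i) (2 * 4 ^ i)) := by
    rw [lowerDensity]
    refine Filter.le_liminf_of_le ?_ ?_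
    · exact (Filter.isBoundedUnder_of ⟨1, fun n => ratio_le_one _ n⟩).isCoboundedUnder_ge
    · filter_upwards [Filter.eventually_ge_atTop 1] with n hn
      have h := count_lower n hn
      have hn0 : (0 : ℝ) < n := by exact_mod_cast hn
      rw [le_div_iff₀ hn0]
      linarith
  refine ⟨⟨h0, hfree, hld⟩, le_trans hld (le_csSup ?_ ?_)⟩
  · refine ⟨1, ?_⟩
    rintro x ⟨S', -, -, rfl⟩
    rw [lowerDensity]
    refine Filter.liminf_le_of_frequently_le ?_ ?_
    · exact (Filter.Eventually.of_forall (fun n => ratio_le_one S' n)).frequently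
    · exact Filter.isBoundedUnder_of ⟨0, fun n => ratio_nonneg S' n⟩
  · exact ⟨_, h0, hfree, rfl⟩
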